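/- arXiv:1512.02268 — 4 statements merged into one kernel-verified Lean document; each statement's English description precedes it below -/
import Mathlib

section
/- Let p, H be real with 0 < p ≤ 1 ≤ H and set k := √(1 − 1/H²). For every real η with Q(η) > 0, the function V(η) := (k·cosh η + √(Q(η)))^k / R₁(η) is differentiable at η and satisfies the differential equation V′(η) = −(1/H²) · (sinh η / R₁(η)) · V(η). -/
/-- `Q p H η = 1 - 1/p² + (1 - 1/H²)·sinh²η`. -/
noncomputable def Q (p H η : ℝ) : ℝ :=
  1 - 1 / p ^ 2 + (1 - 1 / H ^ 2) * Real.sinh η ^ 2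

/-- `R₁ η = cosh η + √(Q η)`. -/
noncomputable def R1 (p H η : ℝ) : ℝ :=
  Real.cosh η + Real.sqrt (Q p H η)

/-- With `k := √(1 - 1/H²)`, the function
`V(η) := (k·cosh η + √(Q η))^k / R₁(η)` is differentiable at every `η` with `Q η > 0`
and satisfies `V′(η) = -(1/H²)·(sinh η / R₁ η)·V(η)`. -/
theorem stmt0 (p H : ℝ) (hp : 0 < p) (hp1 : p ≤ 1) (hH : 1 ≤ H) (η : ℝ)
    (hQ : 0 < Q p H η) :
    HasDerivAt
      (fun t : ℝ =>
        (Real.sqrt (1 - 1 / H ^ 2) * Real.cosh t + Real.sqrt (Q p H t)) ^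
            Real.sqrt (1 - 1 / H ^ 2) / R1 p H t)
      (-(1 / H ^ 2) * (Real.sinh η / R1 p H η) *
        ((Real.sqrt (1 - 1 / H ^ 2) * Real.cosh η + Real.sqrt (Q p H η)) ^
            Real.sqrt (1 - 1 / H ^ 2) / R1 p H η))
      η := by
  set k : ℝ := Real.sqrt (1 - 1 / H ^ 2) with hkdef
  have hH0 : (0:ℝ) < H := lt_of_lt_of_le one_pos hH
  have hnn : (0:ℝ) ≤ 1 - 1 / H ^ 2 := by
    have : 1 / H ^ 2 ≤ 1 := by
      rw [div_le_one (by positivity)]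
      nlinarith
    linarith
  have hk2 : k ^ 2 = 1 - 1 / H ^ 2 := Real.sq_sqrt hnn
  have hknn : 0 ≤ k := Real.sqrt_nonneg _
  set S : ℝ := Real.sqrt (Q p H η) with hSdef
  have hSpos : 0 < S := Real.sqrt_pos.mpr hQ
  have hS2 : S ^ 2 = Q p H η := Real.sq_sqrt hQ.le
  have hApos : 0 < k * Real.cosh η + S :=
    add_pos_of_nonneg_of_pos (mul_nonneg hknn (Real.cosh_pos η).le) hSpos
  have hRpos : 0 < R1 p H η :=
    add_pos_of_nonneg_of_pos (Real.cosh_pos η).le hSpos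
  -- derivative of Q
  have hQ' : HasDerivAt (fun t => Q p H t)
      ((1 - 1 / H ^ 2) * (2 * Real.sinh η * Real.cosh η)) η := by
    have h1 : HasDerivAt (fun t => Real.sinh t ^ 2)
        (2 * Real.sinh η ^ 1 * Real.cosh η) η := (Real.hasDerivAt_sinh η).pow 2
    have h2 := (h1.const_mul (1 - 1 / H ^ 2)).const_add (1 - 1 / p ^ 2)
    simp only [Q]
    refine h2.congr_deriv ?_
    symm
    ring
  have hS' : HasDerivAt (fun t => Real.sqrt (Q p H t))
      ((1 - 1 / H ^ 2) * (2 * Real.sinh η * Real.cosh η) / (2 * S)) η :=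
    hQ'.sqrt hQ.ne'
  have hA' : HasDerivAt (fun t => k * Real.cosh t + Real.sqrt (Q p H t))
      (k * Real.sinh η + (1 - 1 / H ^ 2) * (2 * Real.sinh η * Real.cosh η) / (2 * S)) η :=
    ((Real.hasDerivAt_cosh η).const_mul k).add hS'
  have hP' : HasDerivAt (fun t => (k * Real.cosh t + Real.sqrt (Q p H t)) ^ k)
      ((k * Real.sinh η + (1 - 1 / H ^ 2) * (2 * Real.sinh η * Real.cosh η) / (2 * S)) * k *
        (k * Real.cosh η + S) ^ (k - 1)) η :=
    hA'.rpow_const (Or.inl hApos.ne')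
  have hR' : HasDerivAt (fun t => R1 p H t)
      (Real.sinh η + (1 - 1 / H ^ 2) * (2 * Real.sinh η * Real.cosh η) / (2 * S)) η := by
    simp only [R1]
    exact (Real.hasDerivAt_cosh η).add hS'
  have hV := hP'.div hR' hRpos.ne'
  refine hV.congr_deriv ?_
  symm
  have hsub : (k * Real.cosh η + S) ^ (k - 1) = (k * Real.cosh η + S) ^ k / (k * Real.cosh η + S) :=
    Real.rpow_sub_one hApos.ne' k
  rw [hsub]
  set B : ℝ := (k * Real.cosh η + S) ^ k with hBdef
  have hH2 : 1 / H ^ 2 = 1 - k ^ 2 := by linarith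
  rw [hH2]
  simp only [R1, ← hSdef]
  field_simp
  ring
end

section
/- Let p, H be real with 0 < p ≤ 1 ≤ H and set a := √(1/p² − 1). Define D(η) := 1/H² − 1/p² + (1/H² − 1/p² + 2(1 − 1/H²))·cosh²η and Y₁(η) := exp( −(a/2) · arctan( a · 2·cosh η·√(Q(η)) / D(η) ) ). Then for every real η with Q(η) > 0, sinh η ≠ 0 and D(η) ≠ 0, Y₁ is differentiable at η and Y₁′(η) = ( (1/p² − 1) / ( sinh η · √(Q(η)) ) ) · Y₁(η). -/
/-- `a p = √(1/p² - 1)`. -/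
noncomputable def aa (p : ℝ) : ℝ := Real.sqrt (1 / p ^ 2 - 1)

/-- `D p H η = 1/H² - 1/p² + (1/H² - 1/p² + 2(1 - 1/H²))·cosh²η`. -/
noncomputable def D (p H η : ℝ) : ℝ :=
  1 / H ^ 2 - 1 / p ^ 2 + (1 / H ^ 2 - 1 / p ^ 2 + 2 * (1 - 1 / H ^ 2)) * Real.cosh η ^ 2

/-- `Y₁(η) := exp(-(a/2)·arctan(a·2·cosh η·√(Q η)/D η))`. -/
noncomputable def Y1 (p H η : ℝ) : ℝ :=
  Real.exp (-(aa p / 2) *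
    Real.arctan (aa p * (2 * Real.cosh η * Real.sqrt (Q p H η)) / D p H η))

/-- For every `η` with `Q η > 0`, `sinh η ≠ 0` and `D η ≠ 0`, the function `Y₁`
is differentiable at `η` and satisfies
`Y₁′(η) = ((1/p² - 1)/(sinh η·√(Q η)))·Y₁(η)`. -/
theorem stmt3 (p H : ℝ) (hp : 0 < p) (hp1 : p ≤ 1) (hH : 1 ≤ H) (η : ℝ)
    (hQ : 0 < Q p H η) (hs : Real.sinh η ≠ 0) (hD : D p H η ≠ 0) :
    HasDerivAt (fun t : ℝ => Y1 p H t)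
      ((1 / p ^ 2 - 1) / (Real.sinh η * Real.sqrt (Q p H η)) * Y1 p H η) η := by
  have hQ' : HasDerivAt (fun t => Q p H t)
      ((1 - 1 / H ^ 2) * (2 * Real.sinh η * Real.cosh η)) η := by
    simpa only [Q, Pi.pow_apply, pow_one, Nat.cast_ofNat, show (2:ℕ)-1 = 1 from rfl] using (((Real.hasDerivAt_sinh η).pow 2).const_mul (1 - 1 / H ^ 2)).const_add
      (1 - 1 / p ^ 2)
  have hsq : HasDerivAt (fun t => Real.sqrt (Q p H t))
      ((1 - 1 / H ^ 2) * (2 * Real.sinh η * Real.cosh η) / (2 * Real.sqrt (Q p H η))) η :=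
    hQ'.sqrt hQ.ne'
  have hD' : HasDerivAt (fun t => D p H t)
      ((1 / H ^ 2 - 1 / p ^ 2 + 2 * (1 - 1 / H ^ 2)) * (2 * Real.cosh η * Real.sinh η)) η := by
    simpa only [D, Pi.pow_apply, pow_one, Nat.cast_ofNat, show (2:ℕ)-1 = 1 from rfl] using (((Real.hasDerivAt_cosh η).pow 2).const_mul
      (1 / H ^ 2 - 1 / p ^ 2 + 2 * (1 - 1 / H ^ 2))).const_add (1 / H ^ 2 - 1 / p ^ 2)
  have hN : HasDerivAt (fun t => aa p * (2 * Real.cosh t * Real.sqrt (Q p H t)))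
      (aa p * (2 * Real.sinh η * Real.sqrt (Q p H η) + 2 * Real.cosh η *
        ((1 - 1 / H ^ 2) * (2 * Real.sinh η * Real.cosh η) / (2 * Real.sqrt (Q p H η))))) η := by
    exact (((((Real.hasDerivAt_cosh η).const_mul 2)).mul hsq)).const_mul (aa p)
  have harg := ((hN.div hD' hD).arctan.const_mul (-(aa p / 2))).exp
  simp only [Pi.div_apply] at harg
  unfold Y1
  convert harg using 1
  rw [mul_comm]
  congr 1
  have hx1 : (1:ℝ) ≤ 1 / p ^ 2 := by
    rw [le_div_iff₀ (by positivity)]; nlinarith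
  have hA : aa p ^ 2 = 1 / p ^ 2 - 1 := Real.sq_sqrt (by linarith)
  have hS2 : Real.sqrt (Q p H η) ^ 2 = Q p H η := Real.sq_sqrt hQ.le
  have hSpos : 0 < Real.sqrt (Q p H η) := Real.sqrt_pos.mpr hQ
  set S := Real.sqrt (Q p H η) with hSdef
  set c := Real.cosh η with hcdef
  set s := Real.sinh η with hsdef
  set Dv := D p H η with hDvdef
  have hp2 : 1 / p ^ 2 = aa p ^ 2 + 1 := by linarith
  have hc2 : c ^ 2 = s ^ 2 + 1 := by
    rw [hcdef, hsdef, Real.cosh_sq]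
  have hnum : aa p * (2 * s * S + 2 * c * ((1 - 1 / H ^ 2) * (2 * s * c) / (2 * S))) * Dv -
      aa p * (2 * c * S) * ((1 / H ^ 2 - 1 / p ^ 2 + 2 * (1 - 1 / H ^ 2)) * (2 * c * s))
      = 2 * aa p * s / S * ((S ^ 2 + (1 - 1 / H ^ 2) * c ^ 2) * Dv -
          2 * (1 / H ^ 2 - 1 / p ^ 2 + 2 * (1 - 1 / H ^ 2)) * c ^ 2 * S ^ 2) := by
    field_simp
  have hden : 1 + (aa p * (2 * c * S) / Dv) ^ 2
      = (Dv ^ 2 + aa p ^ 2 * (4 * c ^ 2 * S ^ 2)) / Dv ^ 2 := by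
    field_simp
    ring
  rw [hnum, hden]
  set T := (S ^ 2 + (1 - 1 / H ^ 2) * c ^ 2) * Dv -
      2 * (1 / H ^ 2 - 1 / p ^ 2 + 2 * (1 - 1 / H ^ 2)) * c ^ 2 * S ^ 2 with hTdef
  set W := Dv ^ 2 + aa p ^ 2 * (4 * c ^ 2 * S ^ 2) with hWdef
  have hDv2 : 0 < Dv ^ 2 := lt_of_le_of_ne (sq_nonneg _) (Ne.symm (pow_ne_zero 2 hD))
  have hW : 0 < W := by
    have : 0 ≤ aa p ^ 2 * (4 * c ^ 2 * S ^ 2) := by positivity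
    rw [hWdef]; linarith
  have key : W + s ^ 2 * T = 0 := by
    rw [hWdef, hTdef, hS2, hDvdef]
    simp only [Q, D, hp2, ← hsdef, ← hcdef, hc2]
    ring
  have hstep : -(aa p / 2) * (1 / (W / Dv ^ 2) * (2 * aa p * s / S * T / Dv ^ 2))
      = -(aa p ^ 2 * s * T) / (S * W) := by
    rw [one_div_div]
    field_simp
  rw [hstep, div_eq_div_iff (mul_ne_zero hs hSpos.ne') (mul_ne_zero hSpos.ne' hW.ne')]
  linear_combination (1 / p ^ 2 - 1) * S * key + s ^ 2 * S * T * hA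
end

section
/- Let p, H be real with 0 < p ≤ 1 ≤ H and set a := √(1/p² − 1). With D(η) := 1/H² − 1/p² + (1/H² − 1/p² + 2(1 − 1/H²))·cosh²η and Y₁(η) := exp( −(a/2) · arctan( a · 2·cosh η·√(Q(η)) / D(η) ) ), define r(η) := ( sinh η / R₁(η) ) · Y₁(η). Then for every real η with sinh η > 0, Q(η) > 0 and D(η) ≠ 0, r is differentiable at η and satisfies r′(η) = r(η) / ( p² · R₁(η) · sinh η ). -/
/-- `r(η) := (sinh η / R₁ η)·Y₁(η)`. -/
noncomputable def rr (p H η : ℝ) : ℝ :=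
  Real.sinh η / R1 p H η * Y1 p H η

set_option maxHeartbeats 2000000 in
/-- For every `η` with `sinh η > 0`, `Q η > 0`, `D η ≠ 0`, the function `r`
is differentiable at `η` and satisfies `r′(η) = r(η)/(p²·R₁(η)·sinh η)`. -/
theorem stmt4 (p H : ℝ) (hp : 0 < p) (hp1 : p ≤ 1) (hH : 1 ≤ H) (η : ℝ)
    (hs : 0 < Real.sinh η) (hQ : 0 < Q p H η) (hD : D p H η ≠ 0) :
    HasDerivAt (fun t : ℝ => rr p H t)
      (rr p H η / (p ^ 2 * R1 p H η * Real.sinh η)) η := by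
  have hp0 : p ≠ 0 := hp.ne'
  have hH0 : H ≠ 0 := by positivity
  have hp2 : (0:ℝ) < p ^ 2 := by positivity
  set P := 1 / p ^ 2 with hP
  set J := 1 / H ^ 2 with hJ
  have h1P : 1 ≤ P := by rw [hP, le_div_iff₀ hp2]; nlinarith
  have hJ1 : J ≤ 1 := by rw [hJ, div_le_one (by positivity)]; nlinarith
  have hPpos : 0 < P := by linarith
  have hPne : P ≠ 0 := hPpos.ne'
  have hp2P : p ^ 2 = 1 / P := by rw [hP]; field_simp
  set S := Real.sinh η with hSdef
  set C := Real.cosh η with hCdef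
  set A := aa p with hAdef
  set W := Real.sqrt (Q p H η) with hWdef
  have hA2 : A ^ 2 = P - 1 := by
    rw [hAdef, hP]; exact Real.sq_sqrt (by rw [hP] at h1P; linarith)
  have hC2 : C ^ 2 = 1 + S ^ 2 := by rw [hCdef, hSdef]; exact Real.cosh_sq' η
  have hW2 : W ^ 2 = 1 - P + (1 - J) * S ^ 2 := by
    rw [hWdef, hP, hJ, hSdef]; exact Real.sq_sqrt hQ.le
  have hWpos : (0:ℝ) < W := by rw [hWdef]; exact Real.sqrt_pos.2 hQ
  have hCpos : (0:ℝ) < C := by rw [hCdef]; exact Real.cosh_pos η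
  have hQne : Q p H η ≠ 0 := hQ.ne'
  have hR1val : R1 p H η = C + W := by rw [hCdef, hWdef]; rfl
  have hDval : D p H η = J - P + (J - P + 2 * (1 - J)) * C ^ 2 := by
    rw [hP, hJ, hCdef]; rfl
  have hQ' : 0 < 1 - P + (1 - J) * S ^ 2 := by rw [hP, hJ, hSdef]; exact hQ
  have hu : 0 < P - J := by nlinarith [mul_pos hs hs]
  clear_value P J S C A W
  have hRpos : 0 < C + W := by linarith
  -- derivative of Q
  have hQd : HasDerivAt (fun t => Q p H t) ((1 - J) * (2 * S * C)) η := by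
    have h := (((Real.hasDerivAt_sinh η).pow 2).const_mul
      (1 - 1 / H ^ 2)).const_add (1 - 1 / p ^ 2)
    simp only [Q]
    convert h using 1
    rfl
    rfl
    rfl
    rw [hJ, hSdef, hCdef]; push_cast; ring
  have hWd : HasDerivAt (fun t => Real.sqrt (Q p H t))
      ((1 - J) * (2 * S * C) / (2 * W)) η := by
    rw [hWdef]; exact hQd.sqrt hQne
  -- derivative of R1
  have hR1d : HasDerivAt (fun t => R1 p H t)
      (S + (1 - J) * (2 * S * C) / (2 * W)) η := by
    simp only [R1]
    have h := (Real.hasDerivAt_cosh η).add hWd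
    convert h using 1
    rfl
    rfl
    rfl
    rw [hSdef]
  have hR1ne : R1 p H η ≠ 0 := by rw [hR1val]; positivity
  -- derivative of sinh / R1, cleaned up
  have hf1 : HasDerivAt (fun t => Real.sinh t / R1 p H t)
      ((1 - A ^ 2 * C / W) / (C + W) ^ 2) η := by
    have h := (Real.hasDerivAt_sinh η).div hR1d hR1ne
    convert h using 1
    rfl
    rfl
    rfl
    rw [hR1val, ← hSdef, ← hCdef]
    have hWW : W * W⁻¹ = 1 := mul_inv_cancel₀ hWpos.ne'
    linear_combination (-1/(C+W)^2) * hC2 + (-C/W/(C+W)^2) * hA2 + (-C/W/(C+W)^2) * hW2 + (C*W/(C+W)^2) * hWW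
  -- derivative of D
  have hDd : HasDerivAt (fun t => D p H t)
      ((J - P + 2 * (1 - J)) * (2 * C * S)) η := by
    have h := (((Real.hasDerivAt_cosh η).pow 2).const_mul
      (1 / H ^ 2 - 1 / p ^ 2 + 2 * (1 - 1 / H ^ 2))).const_add (1 / H ^ 2 - 1 / p ^ 2)
    simp only [D]
    convert h using 1
    rfl
    rfl
    rfl
    rw [hJ, hP, hSdef, hCdef]; push_cast; ring
  -- derivative of numerator N
  have hNd : HasDerivAt (fun t => A * (2 * Real.cosh t * Real.sqrt (Q p H t)))
      (A * (2 * S * W + 2 * C * ((1 - J) * (2 * S * C) / (2 * W)))) η := by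
    have h := (((Real.hasDerivAt_cosh η).const_mul 2).mul hWd).const_mul A
    convert h using 1
    rfl
    rfl
    rfl
    rw [← hSdef, ← hCdef, ← hWdef]
  have hargd := hNd.div hDd hD
  have harctan := hargd.arctan
  -- key identity I1
  have hI1 : D p H η ^ 2 + (A * (2 * C * W)) ^ 2 = (P - J) ^ 2 * S ^ 4 := by
    rw [hDval]
    linear_combination
      (((J - P + 2 * (1 - J)) * (2 * (J - P) + (J - P + 2 * (1 - J)) * (C ^ 2 + 1 + S ^ 2)))
        + 4 * A ^ 2 * W ^ 2) * hC2
      + (4 * A ^ 2 * (1 + S ^ 2)) * hW2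
      + (4 * (1 + S ^ 2) * (1 - P + (1 - J) * S ^ 2)) * hA2
  -- clean arctan derivative
  have harctan' : HasDerivAt
      (fun t => Real.arctan (A * (2 * Real.cosh t * Real.sqrt (Q p H t)) / D p H t))
      (-(2 * A / (W * S))) η := by
    convert harctan using 1
    rfl
    simp only [Pi.div_apply]
    rw [← hCdef, ← hWdef]
    have e1 : 1 + (A * (2 * C * W) / D p H η) ^ 2 = (P - J) ^ 2 * S ^ 4 / D p H η ^ 2 := by
      field_simp
      linear_combination hI1
    rw [e1]
    field_simp
    linear_combination (-A*(W^2+C^2*(1-J))) * hDval + (A*(P-J+(J-P+2*(1-J))*C^2)) * hW2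
      + (-A*(J-P+2*(1-J))*(1-J)*(C^2+1+S^2) - A*(J-P)*(1-J) + A*(1-P+(1-J)*S^2)*(J-P+2*(1-J))) * hC2
  -- Y1 derivative
  have hY : HasDerivAt (fun t => Y1 p H t)
      (Y1 p H η * (-(A / 2) * -(2 * A / (W * S)))) η := by
    simp only [Y1, ← hAdef]
    exact (harctan'.const_mul (-(A / 2))).exp
  -- assemble
  have htot := hf1.mul hY
  simp only [rr]
  set Yv := Y1 p H η with hYv
  have hYpos : 0 < Yv := by rw [hYv]; exact Real.exp_pos _
  clear_value Yv
  convert htot using 1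
  rfl
  rfl
  rfl
  rw [hR1val, ← hSdef, hp2P]
  field_simp
  linear_combination (-W) * hA2
end

section
/- Let p, H be real with 0 < p ≤ 1 ≤ H. Let J ⊆ (0, ∞) be an open interval, let η : J → ℝ be differentiable with η′(r) = p² · R₁(η(r)) · sinh(η(r)) / r and Q(η(r)) ≥ 0 for all r ∈ J, and let V be a differentiable real function satisfying V′(s) = −(1/H²)·(sinh s / R₁(s))·V(s) for all s in the range of η. Then W(r) := V(η(r)) is twice differentiable on J and its second derivative satisfies W″(r) = −(1/H²) · (η′(r))² · W(r), i.e. W″(r) = −(p⁴/H²) · R₁(η(r))² · sinh²(η(r)) · W(r) / r², for all r ∈ J. -/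
/-- Let `J ⊆ (0,∞)` be an open interval, `η` differentiable on `J` with
`η′(r) = p²·R₁(η r)·sinh(η r)/r` and `Q(η r) ≥ 0`, and let `V` be differentiable
with `V′(s) = -(1/H²)·(sinh s/R₁ s)·V s` for all `s` in the range of `η`.
Then `W := V ∘ η` is twice differentiable on `J` and
`W″(r) = -(1/H²)·(η′(r))²·W(r)`, i.e.
`W″(r) = -(p⁴/H²)·R₁(η r)²·sinh²(η r)·W(r)/r²`, on `J`. -/
theorem stmt12 (p H : ℝ) (hp : 0 < p) (hp1 : p ≤ 1) (hH : 1 ≤ H)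
    (J : Set ℝ) (hJopen : IsOpen J) (hJconn : J.OrdConnected)
    (hJpos : J ⊆ Set.Ioi (0 : ℝ))
    (η V : ℝ → ℝ)
    (hη : ∀ r ∈ J, HasDerivAt η (p ^ 2 * R1 p H (η r) * Real.sinh (η r) / r) r)
    (hQ : ∀ r ∈ J, 0 ≤ Q p H (η r))
    (hV : Differentiable ℝ V)
    (hV' : ∀ s ∈ η '' J, deriv V s = -(1 / H ^ 2) * (Real.sinh s / R1 p H s) * V s) :
    ∀ r ∈ J,
      HasDerivAt (deriv (fun t => V (η t)))
        (-(1 / H ^ 2) * deriv η r ^ 2 * V (η r)) r ∧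
      -(1 / H ^ 2) * deriv η r ^ 2 * V (η r) =
        -(p ^ 4 / H ^ 2) * R1 p H (η r) ^ 2 * Real.sinh (η r) ^ 2 * V (η r) / r ^ 2 := by
  have hR1 : ∀ s : ℝ, 0 < R1 p H s := by
    intro s
    have h1 := Real.cosh_pos (x := s)
    have h2 := Real.sqrt_nonneg (Q p H s)
    unfold R1; linarith
  intro r hr
  have hrpos : 0 < r := hJpos hr
  have hηr := hη r hr
  set s := η r with hs
  set e := p ^ 2 * R1 p H s * Real.sinh s / r with he
  have hderiv_eta : deriv η r = e := hηr.deriv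
  have hR1s := hR1 s
  -- first derivative of W on J
  have hW' : ∀ t ∈ J, HasDerivAt (fun x => V (η x))
      (-(p ^ 2 / H ^ 2) * Real.sinh (η t) ^ 2 * V (η t) / t) t := by
    intro t ht
    have h1 : HasDerivAt (fun x => V (η x))
        (deriv V (η t) * (p ^ 2 * R1 p H (η t) * Real.sinh (η t) / t)) t :=
      (hV (η t)).hasDerivAt.comp t (hη t ht)
    rw [hV' (η t) ⟨t, ht, rfl⟩] at h1
    convert h1 using 1
    have ht0 : (t : ℝ) ≠ 0 := (hJpos ht).ne'
    have hR : R1 p H (η t) ≠ 0 := (hR1 _).ne'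
    field_simp
  -- deriv W agrees with g near r
  have hEq : deriv (fun t => V (η t)) =ᶠ[nhds r]
      (fun t => -(p ^ 2 / H ^ 2) * Real.sinh (η t) ^ 2 * V (η t) / t) := by
    filter_upwards [hJopen.mem_nhds hr] with t ht
    exact (hW' t ht).deriv
  -- derivative of g at r
  have hsinh2 : HasDerivAt (fun x => Real.sinh (η x) ^ 2)
      ((2 : ℕ) * Real.sinh s ^ 1 * (Real.cosh s * e)) r := (hηr.sinh).pow 2
  have hVc : HasDerivAt (fun x => V (η x)) (deriv V s * e) r :=
    (hV s).hasDerivAt.comp r hηr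
  have hnum : HasDerivAt (fun x => -(p ^ 2 / H ^ 2) * Real.sinh (η x) ^ 2 * V (η x))
      ((-(p ^ 2 / H ^ 2) * ((2 : ℕ) * Real.sinh s ^ 1 * (Real.cosh s * e))) * V s +
        (-(p ^ 2 / H ^ 2) * Real.sinh s ^ 2) * (deriv V s * e)) r :=
    (hsinh2.const_mul (-(p ^ 2 / H ^ 2))).mul hVc
  have hg : HasDerivAt (fun t => -(p ^ 2 / H ^ 2) * Real.sinh (η t) ^ 2 * V (η t) / t)
      ((((-(p ^ 2 / H ^ 2) * ((2 : ℕ) * Real.sinh s ^ 1 * (Real.cosh s * e))) * V s +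
        (-(p ^ 2 / H ^ 2) * Real.sinh s ^ 2) * (deriv V s * e)) * r -
        (-(p ^ 2 / H ^ 2) * Real.sinh s ^ 2 * V s) * 1) / r ^ 2) r :=
    hnum.div (hasDerivAt_id r) hrpos.ne'
  have hW'' : HasDerivAt (deriv (fun t => V (η t)))
      ((((-(p ^ 2 / H ^ 2) * ((2 : ℕ) * Real.sinh s ^ 1 * (Real.cosh s * e))) * V s +
        (-(p ^ 2 / H ^ 2) * Real.sinh s ^ 2) * (deriv V s * e)) * r -
        (-(p ^ 2 / H ^ 2) * Real.sinh s ^ 2 * V s) * 1) / r ^ 2) r :=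
    hg.congr_of_eventuallyEq hEq
  -- algebraic identities
  have hp0 : (p : ℝ) ≠ 0 := hp.ne'
  have hH0 : (H : ℝ) ≠ 0 := by positivity
  have hr0 : (r : ℝ) ≠ 0 := hrpos.ne'
  have hR0 : R1 p H s ≠ 0 := hR1s.ne'
  have hq2 : Real.sqrt (Q p H s) ^ 2 = Q p H s := Real.sq_sqrt (hQ r hr)
  have hcosh : Real.cosh s ^ 2 = 1 + Real.sinh s ^ 2 := by
    rw [Real.cosh_sq]; ring
  have hdVe : deriv V s * e = -(p ^ 2 * Real.sinh s ^ 2 * V s / (H ^ 2 * r)) := by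
    rw [hV' s ⟨r, hr, rfl⟩, he]
    field_simp
  have hkey :
      (((-(p ^ 2 / H ^ 2) * ((2 : ℕ) * Real.sinh s ^ 1 * (Real.cosh s * e))) * V s +
        (-(p ^ 2 / H ^ 2) * Real.sinh s ^ 2) * (deriv V s * e)) * r -
        (-(p ^ 2 / H ^ 2) * Real.sinh s ^ 2 * V s) * 1) / r ^ 2 =
      -(1 / H ^ 2) * deriv η r ^ 2 * V (η r) := by
    rw [hdVe, hderiv_eta, ← hs, he]
    unfold R1
    set q := Real.sqrt (Q p H s) with hqdef
    have hq2' : q ^ 2 = 1 - 1 / p ^ 2 + (1 - 1 / H ^ 2) * Real.sinh s ^ 2 := hq2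
    have hq2'' : p ^ 2 * H ^ 2 * q ^ 2 =
        H ^ 2 * (p ^ 2 - 1) + (H ^ 2 - 1) * p ^ 2 * Real.sinh s ^ 2 := by
      rw [hq2']; field_simp
    push_cast
    field_simp
    linear_combination (V s * Real.sinh s ^ 2) * hq2'' -
      (V s * Real.sinh s ^ 2 * p ^ 2 * H ^ 2) * hcosh
  constructor
  · rw [← hkey]; exact hW''
  · rw [hderiv_eta, he]
    ring
end
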